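/- For a fully commutative element w of a Coxeter group, the linear extensions of the heap H(w) are in bijection with the reduced expressions of w. -/

import Mathlib

/-- A single commutation move: swap two adjacent letters `a b` with `M a b = 2`. -/
def CommMove {B : Type*} (M : CoxeterMatrix B) (l l' : List B) : Prop :=
  ∃ (u v : List B) (a b : B), M a b = 2 ∧ l = u ++ a :: b :: v ∧ l' = u ++ b :: a :: v

/-- Commutation equivalence of words. -/
def CommEquiv {B : Type*} (M : CoxeterMatrix B) : List B → List B → Prop :=
  Relation.ReflTransGen (CommMove M)

/-- Full commutativity. -/
def FullyCommutative {B W : Type*} [Group W] {M : CoxeterMatrix B}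
    (cs : CoxeterSystem M W) (w : W) : Prop :=
  ∀ l l' : List B, cs.IsReduced l → cs.IsReduced l' →
    cs.wordProd l = w → cs.wordProd l' = w → CommEquiv M l l'

/-- The covering relation generating the heap order of the word `l`. -/
def heapRel {B : Type*} (M : CoxeterMatrix B) (l : List B)
    (i j : Fin l.length) : Prop :=
  i < j ∧ M (l.get i) (l.get j) ≠ 2


open Relation List

section Basic
variable {B : Type*} {M : CoxeterMatrix B}

lemma commMove_length {l l' : List B} (h : CommMove M l l') : l.length = l'.length := by
  obtain ⟨u, v, a, b, _, rfl, rfl⟩ := h; simp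

variable {W : Type*} [Group W] (cs : CoxeterSystem M W)

lemma commMove_wordProd {l l' : List B} (h : CommMove M l l') :
    cs.wordProd l = cs.wordProd l' := by
  obtain ⟨u, v, a, b, hab, rfl, rfl⟩ := h
  have hc : cs.simple a * cs.simple b = cs.simple b * cs.simple a := by
    have := cs.simple_mul_simple_pow a b
    rw [hab, pow_two] at this
    calc cs.simple a * cs.simple b = (cs.simple a * cs.simple b)⁻¹ := by
          rw [inv_eq_of_mul_eq_one_right this]
      _ = cs.simple b * cs.simple a := by
          rw [mul_inv_rev, cs.inv_simple, cs.inv_simple]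
  simp only [cs.wordProd_append, cs.wordProd_cons, ← mul_assoc, hc]

lemma commEquiv_length {l l' : List B} (h : CommEquiv M l l') : l.length = l'.length := by
  induction h with
  | refl => rfl
  | tail _ h ih => exact ih.trans (commMove_length h)

lemma commEquiv_wordProd {l l' : List B} (h : CommEquiv M l l') :
    cs.wordProd l = cs.wordProd l' := by
  induction h with
  | refl => rfl
  | tail _ h ih => exact ih.trans (commMove_wordProd cs h)

lemma commEquiv_isReduced {l l' : List B} (h : CommEquiv M l l') (hl : cs.IsReduced l) :
    cs.IsReduced l' := by
  unfold CoxeterSystem.IsReduced at *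
  rw [← commEquiv_wordProd cs h, ← commEquiv_length h]; exact hl

end Basic
section Heap

open Relation

variable {B : Type*} {M : CoxeterMatrix B} {l : List B}

/-- The word obtained by reading labels of `l` in the order given by `σ`. -/
def wd (l : List B) (σ : Equiv.Perm (Fin l.length)) : List B :=
  List.ofFn (fun k => l.get (σ.symm k))

def IsLinExt (M : CoxeterMatrix B) (l : List B) (σ : Equiv.Perm (Fin l.length)) : Prop :=
  ∀ i j, Relation.TransGen (heapRel M l) i j → σ i < σ j

lemma transGen_heapRel_lt {i j : Fin l.length}
    (h : Relation.TransGen (heapRel M l) i j) : i < j := by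
  induction h with
  | single h => exact h.1
  | tail _ h ih => exact ih.trans h.1

lemma swap_adj_lt {n k : ℕ} (hk : k + 1 < n) {p q : Fin n} (hpq : p < q)
    (hne : ¬(p = ⟨k, by omega⟩ ∧ q = ⟨k + 1, hk⟩)) :
    Equiv.swap ⟨k, by omega⟩ ⟨k + 1, hk⟩ p < Equiv.swap ⟨k, by omega⟩ ⟨k + 1, hk⟩ q := by
  rcases p with ⟨p, hp⟩; rcases q with ⟨q, hq⟩
  simp only [Equiv.swap_apply_def, Fin.lt_def, Fin.mk.injEq] at *
  split_ifs <;> simp_all <;> omega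

lemma isLinExt_swap {σ : Equiv.Perm (Fin l.length)} (hσ : IsLinExt M l σ) {k : ℕ}
    (hk : k + 1 < l.length)
    (hbad : ∀ i j, Relation.TransGen (heapRel M l) i j →
      ¬(σ i = ⟨k, by omega⟩ ∧ σ j = ⟨k + 1, hk⟩)) :
    IsLinExt M l (Equiv.swap ⟨k, by omega⟩ ⟨k + 1, hk⟩ * σ) := by
  intro i j h
  exact swap_adj_lt hk (hσ i j h) (hbad i j h)

end Heap
section Lists
variable {B : Type*} {M : CoxeterMatrix B}

lemma list_decomp (L : List B) (k : ℕ) (h : k + 1 < L.length) :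
    L = L.take k ++ L[k] :: L[k+1] :: L.drop (k + 2) := by
  conv_lhs => rw [← List.take_append_drop k L]
  congr 1
  rw [List.drop_eq_getElem_cons (by omega)]
  congr 1
  rw [List.drop_eq_getElem_cons (by omega)]

lemma ofFn_comp_swap {n : ℕ} (f : Fin n → B) {k : ℕ} (hk : k + 1 < n) :
    List.ofFn (fun m => f (Equiv.swap ⟨k, by omega⟩ ⟨k + 1, hk⟩ m)) =
      (List.ofFn f).take k ++ f ⟨k + 1, hk⟩ :: f ⟨k, by omega⟩ :: (List.ofFn f).drop (k + 2) := by
  apply List.ext_getElem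
  · simp; omega
  intro m h1 h2
  simp only [List.length_ofFn] at h1
  rw [List.getElem_ofFn]
  rcases lt_trichotomy m k with hm | rfl | hm
  · rw [List.getElem_append_left (by simp only [List.length_take, List.length_ofFn]; omega)]
    rw [List.getElem_take, List.getElem_ofFn]
    rw [Equiv.swap_apply_of_ne_of_ne (by simp [Fin.ext_iff]; omega) (by simp [Fin.ext_iff]; omega)]
  · rw [List.getElem_append_right (by simp only [List.length_take, List.length_ofFn]; omega)]
    have : m - (List.take m (List.ofFn f)).length = 0 := by simp only [List.length_take, List.length_ofFn]; omega
    simp only [this, List.getElem_cons_zero]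
    exact congrArg f (Equiv.swap_apply_left _ _)
  · rcases Nat.eq_or_lt_of_le hm with hm' | hm'
    · rw [List.getElem_append_right (by simp only [List.length_take, List.length_ofFn]; omega)]
      have : m - (List.take k (List.ofFn f)).length = 1 := by simp only [List.length_take, List.length_ofFn]; omega
      simp only [this, List.getElem_cons_succ, List.getElem_cons_zero]
      have : (⟨m, h1⟩ : Fin n) = ⟨k + 1, hk⟩ := by simp [Fin.ext_iff]; omega
      rw [this, Equiv.swap_apply_right]
    · rw [List.getElem_append_right (by simp only [List.length_take, List.length_ofFn]; omega)]
      have h2' : m - (List.take k (List.ofFn f)).length = (m - k - 2) + 1 + 1 := by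
        simp [List.length_take]; omega
      simp only [h2', List.getElem_cons_succ, List.getElem_drop, List.getElem_ofFn]
      rw [Equiv.swap_apply_of_ne_of_ne (by simp [Fin.ext_iff]; omega)
        (by simp [Fin.ext_iff]; omega)]
      congr 1
      simp [Fin.ext_iff]; omega

lemma commMove_ofFn_swap {n : ℕ} (f : Fin n → B) {k : ℕ} (hk : k + 1 < n)
    (hM : M (f ⟨k, by omega⟩) (f ⟨k + 1, hk⟩) = 2) :
    CommMove M (List.ofFn f) (List.ofFn (fun m => f (Equiv.swap ⟨k, by omega⟩ ⟨k + 1, hk⟩ m))) := by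
  refine ⟨(List.ofFn f).take k, (List.ofFn f).drop (k + 2), f ⟨k, by omega⟩, f ⟨k + 1, hk⟩, hM,
    ?_, ?_⟩
  · have := list_decomp (List.ofFn f) k (by simpa using hk)
    simpa using this
  · exact ofFn_comp_swap f hk

end Lists
section Mono
variable {n : ℕ}

lemma strictMono_of_adj {f : Fin n → Fin n}
    (h : ∀ k (hk : k + 1 < n), f ⟨k, by omega⟩ < f ⟨k + 1, hk⟩) : StrictMono f := by
  have key : ∀ d (i j : Fin n), j.val = i.val + (d + 1) → f i < f j := by
    intro d
    induction d with
    | zero =>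
      intro i j hj
      have hk : i.val + 1 < n := by omega
      have := h i.val hk
      have e1 : (⟨i.val, by omega⟩ : Fin n) = i := Fin.ext rfl
      have e2 : (⟨i.val + 1, hk⟩ : Fin n) = j := by apply Fin.ext; simp only [Fin.val_mk]; omega
      rwa [e1, e2] at this
    | succ d ih =>
      intro i j hj
      have hm : i.val + (d + 1) < n := by omega
      refine (ih i ⟨i.val + (d + 1), hm⟩ rfl).trans ?_
      have hk : i.val + (d + 1) + 1 < n := by omega
      have := h (i.val + (d + 1)) hk
      have e2 : (⟨i.val + (d + 1) + 1, hk⟩ : Fin n) = j := by apply Fin.ext; simp only [Fin.val_mk]; omega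
      rwa [e2] at this
  intro i j hij
  obtain ⟨d, hd⟩ : ∃ d, j.val = i.val + (d + 1) := ⟨j.val - i.val - 1, by
    have := hij; rw [Fin.lt_def] at this; omega⟩
  exact key d i j hd

lemma le_apply_of_strictMono {f : Fin n → Fin n} (h : StrictMono f) (i : Fin n) :
    i.val ≤ (f i).val := by
  obtain ⟨m, hi⟩ : ∃ m, i.val = m := ⟨_, rfl⟩
  induction m using Nat.strong_induction_on generalizing i with
  | _ m ih =>
    subst hi
    rcases Nat.eq_zero_or_pos i.val with h0 | h0
    · omega
    · have hj : i.val - 1 < n := by omega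
      have h1 : f ⟨i.val - 1, hj⟩ < f i := h (by rw [Fin.lt_def]; simp; omega)
      have h2 := ih (i.val - 1) (by omega) ⟨i.val - 1, hj⟩ rfl
      rw [Fin.lt_def] at h1
      simp at h2
      omega

lemma perm_eq_one_of_adj {σ : Equiv.Perm (Fin n)}
    (h : ∀ k (hk : k + 1 < n), σ.symm ⟨k, by omega⟩ < σ.symm ⟨k + 1, hk⟩) : σ = 1 := by
  have hsm : StrictMono ⇑σ.symm := strictMono_of_adj h
  have hsm' : StrictMono ⇑σ := by
    intro a b hab
    rcases lt_trichotomy (σ a) (σ b) with h' | h' | h'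
    · exact h'
    · exact absurd (σ.injective h') (ne_of_lt hab)
    · have := hsm h'
      simp at this
      exact absurd hab (not_lt.2 this.le)
  ext i
  have h1 := le_apply_of_strictMono hsm' i
  have h2 := le_apply_of_strictMono hsm (σ i)
  simp at h2
  simp [Fin.ext_iff]
  omega

end Mono
section Inv
open Relation
variable {B : Type*} {M : CoxeterMatrix B} {l : List B}

def invCount {n : ℕ} (σ : Equiv.Perm (Fin n)) : ℕ :=
  (Finset.univ.filter fun p : Fin n × Fin n => p.1 < p.2 ∧ σ p.2 < σ p.1).card

lemma invCount_pos {n : ℕ} {σ : Equiv.Perm (Fin n)} {p : Fin n × Fin n}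
    (h1 : p.1 < p.2) (h2 : σ p.2 < σ p.1) : 0 < invCount σ := by
  apply Finset.card_pos.2
  exact ⟨p, Finset.mem_filter.2 ⟨Finset.mem_univ _, h1, h2⟩⟩

lemma invCount_swap_lt {n : ℕ} {σ : Equiv.Perm (Fin n)} {k : ℕ} (hk : k + 1 < n)
    (hd : σ.symm ⟨k + 1, hk⟩ < σ.symm ⟨k, by omega⟩) :
    invCount (Equiv.swap ⟨k, by omega⟩ ⟨k + 1, hk⟩ * σ) < invCount σ := by
  unfold invCount
  have hsub : (Finset.univ.filter fun p : Fin n × Fin n =>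
      p.1 < p.2 ∧ (Equiv.swap (⟨k, by omega⟩ : Fin n) ⟨k + 1, hk⟩ * σ) p.2 <
        (Equiv.swap (⟨k, by omega⟩ : Fin n) ⟨k + 1, hk⟩ * σ) p.1) ⊆
      (Finset.univ.filter fun p : Fin n × Fin n => p.1 < p.2 ∧ σ p.2 < σ p.1) := by
    rw [Finset.subset_iff]; intro p hp; rw [Finset.mem_filter] at hp ⊢
    simp only [Finset.mem_filter, Finset.mem_univ, true_and, Equiv.Perm.mul_apply] at hp ⊢
    obtain ⟨hplt, hpsw⟩ := hp
    refine ⟨hplt, ?_⟩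
    by_contra hc
    push_neg at hc
    have hne : σ p.1 ≠ σ p.2 := fun h => absurd (σ.injective h) (ne_of_lt hplt)
    have hlt : σ p.1 < σ p.2 := lt_of_le_of_ne hc hne
    rcases Classical.em (σ p.1 = (⟨k, by omega⟩ : Fin n) ∧ σ p.2 = ⟨k + 1, hk⟩) with hcase | hcase
    · have e1 : p.1 = σ.symm ⟨k, by omega⟩ := by rw [← hcase.1]; simp
      have e2 : p.2 = σ.symm ⟨k + 1, hk⟩ := by rw [← hcase.2]; simp
      have hlt2 : σ.symm (⟨k, by omega⟩ : Fin n) < σ.symm ⟨k + 1, hk⟩ := by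
        rw [← e1, ← e2]; exact hplt
      exact absurd hd (not_lt.2 hlt2.le)
    · exact absurd (swap_adj_lt hk hlt hcase) (not_lt.2 hpsw.le)
  apply Finset.card_lt_card
  refine (Finset.ssubset_iff_of_subset hsub).2
    ⟨(σ.symm ⟨k + 1, hk⟩, σ.symm ⟨k, by omega⟩), ?_, ?_⟩
  · refine Finset.mem_filter.2 ⟨Finset.mem_univ _, hd, ?_⟩
    simp only [Equiv.apply_symm_apply]
    exact Fin.mk_lt_mk.2 (by omega)
  · intro hmem
    have h2 := (Finset.mem_filter.1 hmem).2.2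
    simp only [Equiv.Perm.mul_apply, Equiv.apply_symm_apply, Equiv.swap_apply_left,
      Equiv.swap_apply_right] at h2
    exact absurd h2 (by simp [Fin.lt_def])

lemma commEquiv_wd {σ : Equiv.Perm (Fin l.length)} (hσ : IsLinExt M l σ) :
    CommEquiv M l (wd l σ) := by
  obtain ⟨N, hN⟩ : ∃ N, invCount σ ≤ N := ⟨_, le_refl _⟩
  induction N generalizing σ with
  | zero =>
    by_cases hadj : ∀ k (hk : k + 1 < l.length), σ.symm ⟨k, by omega⟩ < σ.symm ⟨k + 1, hk⟩
    · rw [perm_eq_one_of_adj hadj]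
      have h1 : wd l 1 = l := by simp [wd, Equiv.Perm.one_symm]
      rw [h1]
      exact Relation.ReflTransGen.refl
    · push_neg at hadj
      obtain ⟨k, hk, hle⟩ := hadj
      have hd : σ.symm ⟨k + 1, hk⟩ < σ.symm ⟨k, by omega⟩ :=
        lt_of_le_of_ne hle (fun h => by
          have := σ.symm.injective h
          simp [Fin.ext_iff] at this)
      have h0 : 0 < invCount σ := invCount_pos (σ := σ)
        (p := (σ.symm ⟨k + 1, hk⟩, σ.symm ⟨k, by omega⟩)) hd
        (by simp only [Equiv.apply_symm_apply]; exact Fin.mk_lt_mk.2 (by omega))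
      omega
  | succ N ih =>
    by_cases hadj : ∀ k (hk : k + 1 < l.length), σ.symm ⟨k, by omega⟩ < σ.symm ⟨k + 1, hk⟩
    · rw [perm_eq_one_of_adj hadj]
      have h1 : wd l 1 = l := by simp [wd, Equiv.Perm.one_symm]
      rw [h1]
      exact Relation.ReflTransGen.refl
    · push_neg at hadj
      obtain ⟨k, hk, hle⟩ := hadj
      have hd : σ.symm ⟨k + 1, hk⟩ < σ.symm ⟨k, by omega⟩ :=
        lt_of_le_of_ne hle (fun h => by
          have := σ.symm.injective h
          simp [Fin.ext_iff] at this)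
      obtain ⟨i, hi⟩ : ∃ i, σ.symm ⟨k + 1, hk⟩ = i := ⟨_, rfl⟩
      obtain ⟨j, hj⟩ : ∃ j, σ.symm ⟨k, by omega⟩ = j := ⟨_, rfl⟩
      rw [hi, hj] at hd
      have hσi : σ i = ⟨k + 1, hk⟩ := by rw [← hi]; exact Equiv.apply_symm_apply σ _
      have hσj : σ j = ⟨k, by omega⟩ := by rw [← hj]; exact Equiv.apply_symm_apply σ _
      have hM2 : M (l.get i) (l.get j) = 2 := by
        by_contra hne
        have h1 := hσ i j (Relation.TransGen.single ⟨hd, hne⟩)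
        rw [hσi, hσj] at h1
        exact absurd h1 (by simp [Fin.lt_def])
      have hbad : ∀ i' j', Relation.TransGen (heapRel M l) i' j' →
          ¬(σ i' = ⟨k, by omega⟩ ∧ σ j' = ⟨k + 1, hk⟩) := by
        rintro i' j' htg ⟨h1, h2⟩
        have hi' : i' = j := σ.injective (h1.trans hσj.symm)
        have hj' : j' = i := σ.injective (h2.trans hσi.symm)
        have hlt := transGen_heapRel_lt htg
        rw [hi', hj'] at hlt
        exact absurd hd (not_lt.2 hlt.le)
      have hσ' := isLinExt_swap hσ hk hbad
      have hceq := ih hσ' (by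
        have hd' : σ.symm ⟨k + 1, hk⟩ < σ.symm ⟨k, by omega⟩ := by rw [hi, hj]; exact hd
        have := invCount_swap_lt hk hd'
        omega)
      refine hceq.tail ?_
      obtain ⟨τ, hτ⟩ : ∃ τ, Equiv.swap (⟨k, by omega⟩ : Fin l.length) ⟨k + 1, hk⟩ * σ = τ :=
        ⟨_, rfl⟩
      have hsymm : ∀ m, τ.symm m = σ.symm (Equiv.swap ⟨k, by omega⟩ ⟨k + 1, hk⟩ m) := by
        intro m
        rw [← hτ]
        simp [Equiv.Perm.mul_def, Equiv.symm_trans_apply]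
      have hwd : wd l (Equiv.swap (⟨k, by omega⟩ : Fin l.length) ⟨k + 1, hk⟩ * σ) = wd l τ := by
        rw [hτ]
      rw [hwd]
      have h1 : wd l σ = List.ofFn (fun m => (fun m' => l.get (τ.symm m'))
          (Equiv.swap ⟨k, by omega⟩ ⟨k + 1, hk⟩ m)) := by
        unfold wd
        exact congrArg List.ofFn (funext fun m => by
          simp only [hsymm, Equiv.swap_apply_self])
      have hf1 : τ.symm ⟨k, by omega⟩ = i := by
        rw [hsymm, Equiv.swap_apply_left]; exact hi
      have hf2 : τ.symm ⟨k + 1, hk⟩ = j := by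
        rw [hsymm, Equiv.swap_apply_right]; exact hj
      have hmv := commMove_ofFn_swap (M := M) (fun m' => l.get (τ.symm m'))
        hk (by
          show M (l.get (τ.symm ⟨k, by omega⟩)) (l.get (τ.symm ⟨k + 1, hk⟩)) = 2
          rw [hf1, hf2]
          exact hM2)
      rw [h1]
      exact hmv
end Inv
section Surj
open Relation
variable {B : Type*} {M : CoxeterMatrix B} {l : List B}

lemma getElem_append_cons₀ (u v : List B) (a x : B) :
    (u ++ a :: x :: v)[u.length]'(by simp) = a := by
  rw [List.getElem_append_right (le_refl _)]
  simp

lemma getElem_append_cons₁ (u v : List B) (a x : B) :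
    (u ++ a :: x :: v)[u.length + 1]'(by simp) = x := by
  rw [List.getElem_append_right (by omega)]
  simp

lemma exists_isLinExt_of_commEquiv {l' : List B} (h : CommEquiv M l l') :
    ∃ σ : Equiv.Perm (Fin l.length), IsLinExt M l σ ∧ l' = wd l σ := by
  induction h with
  | refl =>
    refine ⟨1, fun i j h => by simpa using transGen_heapRel_lt h, by simp [wd, Equiv.Perm.one_symm]⟩
  | @tail b c hbc hmv ih =>
    obtain ⟨σ, hσ, hb'⟩ := ih
    subst hb'
    obtain ⟨u, v, a, x, hM2, hb, hc⟩ := hmv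
    have hlen : (wd l σ).length = l.length := by simp [wd]
    have hk : u.length + 1 < l.length := by
      rw [← hlen, hb]; simp
    have hga : l.get (σ.symm ⟨u.length, by omega⟩) = a := by
      have h1 : (wd l σ)[u.length]'(by rw [hlen]; omega) = a := by
        simp only [hb]; exact getElem_append_cons₀ u v a x
      rw [← h1]; simp [wd]
    have hgx : l.get (σ.symm ⟨u.length + 1, hk⟩) = x := by
      have h1 : (wd l σ)[u.length + 1]'(by rw [hlen]; omega) = x := by
        simp only [hb]; exact getElem_append_cons₁ u v a x
      rw [← h1]; simp [wd]
    have hbad : ∀ i j, Relation.TransGen (heapRel M l) i j →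
        ¬(σ i = ⟨u.length, by omega⟩ ∧ σ j = ⟨u.length + 1, hk⟩) := by
      rintro i j htg ⟨h1, h2⟩
      obtain ⟨m, him, hmj⟩ := Relation.TransGen.head'_iff.1 htg
      rcases hmj.cases_head with heq | ⟨m2, hm2, hm2j⟩
      · have hrel : heapRel M l i j := by rwa [heq] at him
        have hi : i = σ.symm ⟨u.length, by omega⟩ := by rw [← h1, Equiv.symm_apply_apply]
        have hj : j = σ.symm ⟨u.length + 1, hk⟩ := by rw [← h2, Equiv.symm_apply_apply]
        apply hrel.2
        rw [hi, hj, hga, hgx]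
        exact hM2
      · have g1 := hσ i m (Relation.TransGen.single him)
        have g2 := hσ m j (Relation.TransGen.head' hm2 hm2j)
        rw [h1] at g1
        rw [h2] at g2
        rw [Fin.lt_def] at g1 g2
        simp only [Fin.val_mk] at g1 g2
        omega
    refine ⟨Equiv.swap ⟨u.length, by omega⟩ ⟨u.length + 1, hk⟩ * σ,
      isLinExt_swap hσ hk hbad, ?_⟩
    obtain ⟨τ, hτ⟩ : ∃ τ, Equiv.swap (⟨u.length, by omega⟩ : Fin l.length)
        ⟨u.length + 1, hk⟩ * σ = τ := ⟨_, rfl⟩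
    rw [hτ, hc]
    have hsymm : ∀ m, τ.symm m =
        σ.symm (Equiv.swap ⟨u.length, by omega⟩ ⟨u.length + 1, hk⟩ m) := by
      intro m
      rw [← hτ]
      simp [Equiv.Perm.mul_def, Equiv.symm_trans_apply]
    have h1 : wd l τ = (wd l σ).take u.length ++ l.get (σ.symm ⟨u.length + 1, hk⟩) ::
        l.get (σ.symm ⟨u.length, by omega⟩) :: (wd l σ).drop (u.length + 2) := by
      have e1 : wd l τ = List.ofFn (fun m => (fun m' => l.get (σ.symm m'))
          (Equiv.swap ⟨u.length, by omega⟩ ⟨u.length + 1, hk⟩ m)) :=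
        congrArg List.ofFn (funext fun m => by simp only [hsymm])
      rw [e1]
      exact ofFn_comp_swap (fun m' => l.get (σ.symm m')) hk
    rw [h1, hb, hga, hgx]
    have htake : (u ++ a :: x :: v).take u.length = u := List.take_left
    have hdrop : (u ++ a :: x :: v).drop (u.length + 2) = v := by
      rw [show u ++ a :: x :: v = (u ++ [a, x]) ++ v by simp]
      exact List.drop_left' (by simp)
    rw [htake, hdrop]

end Surj
section Inj
open Relation
variable {B : Type*} {M : CoxeterMatrix B} {l : List B}

lemma wd_injective {σ τ : Equiv.Perm (Fin l.length)} (hσ : IsLinExt M l σ)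
    (hτ : IsLinExt M l τ) (h : wd l σ = wd l τ) : σ = τ := by
  have key : ∀ m (hm : m < l.length), σ.symm ⟨m, hm⟩ = τ.symm ⟨m, hm⟩ := by
    intro m
    induction m using Nat.strong_induction_on with
    | _ m ih =>
      intro hm
      by_contra hne
      have hlab : l.get (σ.symm ⟨m, hm⟩) = l.get (τ.symm ⟨m, hm⟩) := by
        have h1 : (wd l σ)[m]'(by simp [wd]; omega) = (wd l τ)[m]'(by simp [wd]; omega) := by
          simp only [h]
        simpa [wd] using h1
      rcases lt_trichotomy (σ.symm ⟨m, hm⟩) (τ.symm ⟨m, hm⟩) with hij | hij | hij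
      · have hrel : heapRel M l (σ.symm ⟨m, hm⟩) (τ.symm ⟨m, hm⟩) :=
          ⟨hij, by rw [hlab, M.diagonal]; omega⟩
        have h1 := hτ _ _ (Relation.TransGen.single hrel)
        rw [Equiv.apply_symm_apply] at h1
        have hlt : (τ (σ.symm ⟨m, hm⟩)).val < m := h1
        have h2 := ih (τ (σ.symm ⟨m, hm⟩)).val hlt (Fin.is_lt _)
        simp only [Fin.eta, Equiv.symm_apply_apply] at h2
        have h4 : τ (σ.symm ⟨m, hm⟩) = ⟨m, hm⟩ := by
          have h3 := congrArg σ h2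
          rw [Equiv.apply_symm_apply, Equiv.apply_symm_apply] at h3
          exact h3
        rw [h4] at hlt
        exact absurd hlt (lt_irrefl m)
      · exact hne hij
      · have hrel : heapRel M l (τ.symm ⟨m, hm⟩) (σ.symm ⟨m, hm⟩) :=
          ⟨hij, by rw [hlab, M.diagonal]; omega⟩
        have h1 := hσ _ _ (Relation.TransGen.single hrel)
        rw [Equiv.apply_symm_apply] at h1
        have hlt : (σ (τ.symm ⟨m, hm⟩)).val < m := h1
        have h2 := ih (σ (τ.symm ⟨m, hm⟩)).val hlt (Fin.is_lt _)
        simp only [Fin.eta, Equiv.symm_apply_apply] at h2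
        have h4 : σ (τ.symm ⟨m, hm⟩) = ⟨m, hm⟩ := by
          have h3 := congrArg τ h2.symm
          rw [Equiv.apply_symm_apply, Equiv.apply_symm_apply] at h3
          exact h3
        rw [h4] at hlt
        exact absurd hlt (lt_irrefl m)
  apply Equiv.ext
  intro x
  have hk : x = τ.symm (σ x) := by
    have := key (σ x).val (σ x).isLt
    simpa using this
  calc σ x = τ (τ.symm (σ x)) := (Equiv.apply_symm_apply τ _).symm
    _ = τ x := by rw [← hk]

end Inj

theorem linearExtensions_equiv_reducedWords {B W : Type*} [Group W]
    (M : CoxeterMatrix B) (cs : CoxeterSystem M W) (w : W)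
    (hw : FullyCommutative cs w)
    (l : List B) (hl : cs.IsReduced l) (hlw : cs.wordProd l = w) :
    ∃ f : {σ : Equiv.Perm (Fin l.length) //
            ∀ i j, Relation.TransGen (heapRel M l) i j → σ i < σ j} ≃
          {l' : List B // cs.IsReduced l' ∧ cs.wordProd l' = w},
      ∀ σ, (f σ : List B) = List.ofFn (fun k => l.get (σ.val.symm k)) := by
  have hprop : ∀ σ : {σ : Equiv.Perm (Fin l.length) //
      ∀ i j, Relation.TransGen (heapRel M l) i j → σ i < σ j},
      cs.IsReduced (wd l σ.val) ∧ cs.wordProd (wd l σ.val) = w := by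
    intro σ
    have hce : CommEquiv M l (wd l σ.val) := commEquiv_wd σ.2
    exact ⟨commEquiv_isReduced cs hce hl, by rw [← commEquiv_wordProd cs hce]; exact hlw⟩
  let g : {σ : Equiv.Perm (Fin l.length) //
      ∀ i j, Relation.TransGen (heapRel M l) i j → σ i < σ j} →
      {l' : List B // cs.IsReduced l' ∧ cs.wordProd l' = w} :=
    fun σ => ⟨wd l σ.val, hprop σ⟩
  have hinj : Function.Injective g := by
    intro σ τ hst
    have h1 := congrArg Subtype.val hst
    exact Subtype.ext (wd_injective σ.2 τ.2 h1)
  have hsurj : Function.Surjective g := by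
    rintro ⟨l', hred, hprod⟩
    have hce : CommEquiv M l l' := hw l l' hl hred hlw hprod
    obtain ⟨σ, hσ, hwd⟩ := exists_isLinExt_of_commEquiv hce
    exact ⟨⟨σ, hσ⟩, Subtype.ext hwd.symm⟩
  exact ⟨Equiv.ofBijective g ⟨hinj, hsurj⟩, fun σ => rfl⟩
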